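/- Let E be a Riesz space and let p, q : ℕ → ℕ satisfy the deferred property. The positive cone E₊ = {x ∈ E : 0 ≤ x} is closed under deferred statistical order convergence: if x_n ∈ E₊ for all n ∈ ℕ and x_n →^{D_{st_o}}_{p,q} x, then x ∈ E₊. -/

import Mathlib

open Filter Topology

variable {E : Type*} [AddCommGroup E] [Lattice E]
  [CovariantClass E E (· + ·) (· ≤ ·)] [Module ℝ E] [PosSMulMono ℝ E]

/-- `p` and `q` satisfy the deferred property: `p n < q n` for all `n` and `q n → ∞`. -/
def DeferredProperty (p q : ℕ → ℕ) : Prop :=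
  (∀ n, p n < q n) ∧ Tendsto q atTop atTop

open Classical in
/-- The ratio `|{k ∈ K : p n < k ≤ q n}| / (q n - p n)`. -/
noncomputable def deferredRatio (p q : ℕ → ℕ) (K : Set ℕ) (n : ℕ) : ℝ :=
  (((Finset.Ioc (p n) (q n)).filter (fun k => k ∈ K)).card : ℝ) / ((q n : ℝ) - (p n : ℝ))

/-- The deferred density of `K ⊆ ℕ` is `a`. -/
def DeferredDensity (p q : ℕ → ℕ) (K : Set ℕ) (a : ℝ) : Prop :=
  Tendsto (deferredRatio p q K) atTop (nhds a)

/-- `z` is deferred statistical order decreasing to `0`: there is an (infinite) set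
`K = {k₁ < k₂ < ⋯}` of deferred density one along which `z` is decreasing with infimum `0`. -/
def DStatDecreasing (p q : ℕ → ℕ) (z : ℕ → E) : Prop :=
  ∃ K : Set ℕ, K.Infinite ∧ DeferredDensity p q K 1 ∧
    (∀ i ∈ K, ∀ j ∈ K, i ≤ j → z j ≤ z i) ∧ IsGLB (z '' K) 0

/-- `x` is deferred statistical order convergent to `l`. -/
def DStatOrderConv (p q : ℕ → ℕ) (x : ℕ → E) (l : E) : Prop :=
  ∃ z : ℕ → E, DStatDecreasing p q z ∧
    ∃ K : Set ℕ, K.Infinite ∧ DeferredDensity p q K 1 ∧ ∀ k ∈ K, |x k - l| ≤ z k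

open Filter Topology Classical in
lemma inter_unbounded (p q : ℕ → ℕ) (hpq : (∀ n, p n < q n) ∧ Tendsto q atTop atTop)
    (K₁ K₂ : Set ℕ)
    (h1 : Tendsto (fun n => (((Finset.Ioc (p n) (q n)).filter (fun k => k ∈ K₁)).card : ℝ) / ((q n : ℝ) - (p n : ℝ))) atTop (nhds 1))
    (h2 : Tendsto (fun n => (((Finset.Ioc (p n) (q n)).filter (fun k => k ∈ K₂)).card : ℝ) / ((q n : ℝ) - (p n : ℝ))) atTop (nhds 1))
    (N : ℕ) : ∃ k, N ≤ k ∧ k ∈ K₁ ∩ K₂ := by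
  by_contra hcon
  push_neg at hcon
  -- every element of K₁ ∩ K₂ is < N
  have hbd : ∀ k, k ∈ K₁ → k ∈ K₂ → k < N := by
    intro k hk1 hk2
    by_contra h
    exact absurd ⟨hk1, hk2⟩ (hcon k (le_of_not_gt h))
  have hsum : Tendsto (fun n => (((Finset.Ioc (p n) (q n)).filter (fun k => k ∈ K₁)).card : ℝ) / ((q n : ℝ) - (p n : ℝ)) + (((Finset.Ioc (p n) (q n)).filter (fun k => k ∈ K₂)).card : ℝ) / ((q n : ℝ) - (p n : ℝ))) atTop (nhds 2) := by
    have := h1.add h2; norm_num at this; exact this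
  have hev : ∀ᶠ n in atTop, ((3:ℝ)/2) < (((Finset.Ioc (p n) (q n)).filter (fun k => k ∈ K₁)).card : ℝ) / ((q n : ℝ) - (p n : ℝ)) + (((Finset.Ioc (p n) (q n)).filter (fun k => k ∈ K₂)).card : ℝ) / ((q n : ℝ) - (p n : ℝ)) :=
    (tendsto_order.mp hsum).1 _ (by norm_num)
  have hq : ∀ᶠ n in atTop, 3 * N + 3 ≤ q n := hpq.2.eventually_ge_atTop _
  obtain ⟨n, hr, hqn⟩ := (hev.and hq).exists
  set A := (Finset.Ioc (p n) (q n)).filter (fun k => k ∈ K₁) with hA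
  set B := (Finset.Ioc (p n) (q n)).filter (fun k => k ∈ K₂) with hB
  have hpq' : (p n : ℝ) < (q n : ℝ) := by exact_mod_cast hpq.1 n
  have hd0 : (0:ℝ) < (q n : ℝ) - (p n : ℝ) := by linarith
  -- card A + card B > (3/2) d
  have hcards : ((3:ℝ)/2) * ((q n : ℝ) - (p n : ℝ)) < (A.card : ℝ) + (B.card : ℝ) := by
    rw [← add_div, lt_div_iff₀ hd0] at hr
    linarith
  -- card (A ∩ B) ≥ card A + card B - d
  have hunion : ((A ∪ B).card : ℝ) ≤ (q n : ℝ) - (p n : ℝ) := by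
    have h1 : (A ∪ B) ⊆ Finset.Ioc (p n) (q n) := by
      intro k hk
      rcases Finset.mem_union.mp hk with h | h
      · exact (Finset.mem_filter.mp h).1
      · exact (Finset.mem_filter.mp h).1
    have h2 := Finset.card_le_card h1
    rw [Nat.card_Ioc] at h2
    have h3 : ((A ∪ B).card : ℝ) ≤ ((q n - p n : ℕ) : ℝ) := by exact_mod_cast h2
    rwa [Nat.cast_sub (hpq.1 n).le] at h3
  have hcardeq : A.card + B.card = (A ∪ B).card + (A ∩ B).card := (Finset.card_union_add_card_inter A B).symm
  have hinter : ((q n : ℝ) - (p n : ℝ)) / 2 < ((A ∩ B).card : ℝ) := by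
    have : (A.card : ℝ) + B.card = ((A ∪ B).card : ℝ) + ((A ∩ B).card : ℝ) := by exact_mod_cast hcardeq
    linarith
  -- A ∩ B nonempty, get k
  have hne : (A ∩ B).Nonempty := by
    rw [← Finset.card_pos]
    have h0 : (0:ℝ) < ((A ∩ B).card : ℝ) := lt_trans (by linarith) hinter
    exact_mod_cast h0
  obtain ⟨k, hk⟩ := hne
  have hkA := Finset.mem_inter.mp hk |>.1
  have hkB := Finset.mem_inter.mp hk |>.2
  have hk1 := Finset.mem_filter.mp hkA
  have hk2 := Finset.mem_filter.mp hkB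
  have hkN : k < N := hbd k hk1.2 hk2.2
  have hpk : p n < k := (Finset.mem_Ioc.mp hk1.1).1
  have hpN : p n < N := lt_trans hpk hkN
  -- A ∩ B ⊆ Ioo (p n) N
  have hsub : A ∩ B ⊆ Finset.Ioo (p n) N := by
    intro j hj
    have hjA := Finset.mem_inter.mp hj |>.1
    have hjB := Finset.mem_inter.mp hj |>.2
    have hj1 := Finset.mem_filter.mp hjA
    have hj2 := Finset.mem_filter.mp hjB
    exact Finset.mem_Ioo.mpr ⟨(Finset.mem_Ioc.mp hj1.1).1, hbd j hj1.2 hj2.2⟩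
  have hcard2 : (A ∩ B).card ≤ N := by
    calc (A ∩ B).card ≤ (Finset.Ioo (p n) N).card := Finset.card_le_card hsub
    _ = N - p n - 1 := Nat.card_Ioo _ _
    _ ≤ N := by omega
  -- d > 2N + 2
  have hd : (2*N + 2 : ℝ) < (q n : ℝ) - (p n : ℝ) := by
    have h1 : (p n : ℝ) < N := by exact_mod_cast hpN
    have h2 : (3*N + 3 : ℝ) ≤ q n := by exact_mod_cast hqn
    linarith
  have : (N : ℝ) < ((A ∩ B).card : ℝ) := by linarith
  have := hcard2
  have : ((A ∩ B).card : ℝ) ≤ N := by exact_mod_cast this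
  linarith

open Classical in
private lemma dd_inter_unbounded (p q : ℕ → ℕ) (hpq : DeferredProperty p q)
    (K₁ K₂ : Set ℕ) (h1 : DeferredDensity p q K₁ 1) (h2 : DeferredDensity p q K₂ 1)
    (N : ℕ) : ∃ k, N ≤ k ∧ k ∈ K₁ ∩ K₂ :=
  inter_unbounded p q hpq K₁ K₂ h1 h2 N

theorem stmt10 (p q : ℕ → ℕ) (hpq : DeferredProperty p q) (x : ℕ → E) (a : E)
    (hpos : ∀ n, 0 ≤ x n) (hx : DStatOrderConv p q x a) : 0 ≤ a := by
  obtain ⟨z, ⟨K₁, _, hd1, hdec, hglb⟩, K₂, _, hd2, hbnd⟩ := hx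
  have hlb : -a ∈ lowerBounds (z '' K₁) := by
    rintro y ⟨i, hi, rfl⟩
    obtain ⟨k, hik, hk1, hk2⟩ := dd_inter_unbounded p q hpq K₁ K₂ hd1 hd2 i
    have h1 : -a ≤ x k - a := by
      have := hpos k
      calc -a = 0 - a := by rw [zero_sub]
      _ ≤ x k - a := by exact sub_le_sub_right this a
    have h2 : x k - a ≤ |x k - a| := le_abs_self _
    have h3 : |x k - a| ≤ z k := hbnd k hk2
    have h4 : z k ≤ z i := hdec i hi k hk1 hik
    exact le_trans h1 (le_trans h2 (le_trans h3 h4))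
  exact neg_nonpos.mp (hglb.2 hlb)
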